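/- Fix ω ∈ {0,1}^{𝔼^d}, η ∈ (ℝ₊)^{𝔼^d} and distinct points x, y ∈ ℤ^d. Suppose there exist a finite nonempty set C ⊆ ℤ^d with d(c,c') = 0 for all c, c' ∈ C (for instance the vertex set of a circuit of open edges all having passage time 0), and a finite set R ⊆ ℤ^d containing x and y, such that every path from x, and every path from y, to a vertex outside R ∪ C contains a vertex of C. Then the sets {z ∈ ℤ^d : d(x,z) < d(y,z)} and {z ∈ ℤ^d : d(x,z) > d(y,z)} are not both infinite; that is, Coex(x,y) does not hold in the configuration (ω,η). -/

import Mathlib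

open MeasureTheory Filter Set Topology
open scoped Classical
open scoped ENNReal NNReal

namespace GM

/-- Vertices of the grid `ℤ^d`. -/
abbrev V (d : ℕ) := Fin d → ℤ

/-- The `ℓ¹` norm of a point of `ℤ^d`. -/
def norm1 {d : ℕ} (x : V d) : ℕ := ∑ i, (x i).natAbs

/-- Two vertices are adjacent when they are at `ℓ¹`-distance 1. -/
def Adj {d : ℕ} (x y : V d) : Prop := norm1 (x - y) = 1

/-- An unordered pair of vertices is a grid edge if its endpoints are adjacent. -/
def IsGridEdge {d : ℕ} (e : Sym2 (V d)) : Prop := ∃ x y : V d, Adj x y ∧ e = s(x, y)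

/-- The set `𝔼^d` of edges of the grid `ℤ^d`. -/
def Edge (d : ℕ) : Type := {e : Sym2 (V d) // IsGridEdge e}

/-- The edge joining two adjacent vertices. -/
def edgeMk {d : ℕ} {x y : V d} (h : Adj x y) : Edge d := ⟨s(x, y), x, y, h, rfl⟩

/-- Environments: `Ω_E = {0,1}^{𝔼^d}`. -/
abbrev ΩE (d : ℕ) := Edge d → Bool

/-- Passage-time configurations: `Ω_S = (ℝ₊)^{𝔼^d}`. -/
abbrev ΩS (d : ℕ) := Edge d → ℝ≥0

/-- Translation of an edge by a vector `u`. -/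
def shiftEdge {d : ℕ} (u : V d) (e : Edge d) : Edge d :=
  ⟨Sym2.map (· + u) e.1, by
    obtain ⟨x, y, hxy, he⟩ := e.2
    refine ⟨x + u, y + u, ?_, ?_⟩
    · show norm1 (x + u - (y + u)) = 1
      rw [add_sub_add_right_eq_sub]; exact hxy
    · rw [he, Sym2.map_pair_eq]⟩

/-- The shift `θ_u` acting on configurations indexed by edges. -/
def shiftC {d : ℕ} {X : Type*} (u : V d) (ξ : Edge d → X) : Edge d → X :=
  fun e => ξ (shiftEdge u e)

/-- An open step between two adjacent vertices. -/
def OpenStep {d : ℕ} (ω : ΩE d) (x y : V d) : Prop := ∃ h : Adj x y, ω (edgeMk h) = true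

/-- A (simple) lattice path: a nonempty list of distinct vertices, consecutive ones adjacent. -/
def IsLatticePath {d : ℕ} (l : List (V d)) : Prop := l ≠ [] ∧ l.Nodup ∧ l.Chain' Adj

/-- A simple path all of whose edges are open in `ω`. -/
def IsOpenPath {d : ℕ} (ω : ΩE d) (l : List (V d)) : Prop :=
  l ≠ [] ∧ l.Nodup ∧ l.Chain' (OpenStep ω)

/-- An open path from `x` to `y`. -/
def PathFrom {d : ℕ} (ω : ΩE d) (x y : V d) (l : List (V d)) : Prop :=
  IsOpenPath ω l ∧ l.head? = some x ∧ l.getLast? = some y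

/-- Passage time of the edge joining `x` and `y` (junk value `0` if not adjacent). -/
noncomputable def edgeTime {d : ℕ} (η : ΩS d) (x y : V d) : ℝ≥0∞ :=
  if h : Adj x y then (η (edgeMk h) : ℝ≥0∞) else 0

/-- The passage time `Σ_{e ∈ γ} η_e` of a path. -/
noncomputable def pathTime {d : ℕ} (η : ΩS d) (l : List (V d)) : ℝ≥0∞ :=
  ((l.zip l.tail).map (fun q => edgeTime η q.1 q.2)).sum

/-- The travel time `d(x,y)(ω,η)`, equal to `+∞` when no open path joins `x` to `y`. -/
noncomputable def travelTime {d : ℕ} (ω : ΩE d) (η : ΩS d) (x y : V d) : ℝ≥0∞ :=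
  sInf {r | ∃ l, PathFrom ω x y l ∧ pathTime η l = r}

/-- `x` and `y` are joined by an open path. -/
def Conn {d : ℕ} (ω : ΩE d) (x y : V d) : Prop := ∃ l, PathFrom ω x y l

/-- `x` belongs to an infinite open cluster (`x ↔ ∞`). -/
def ClusterInf {d : ℕ} (ω : ΩE d) (x : V d) : Prop :=
  ∀ n : ℕ, ∃ y, n ≤ norm1 (y - x) ∧ Conn ω x y

/-- The chemical distance `D(x,y)(ω)`: minimal number of edges of an open path. -/
noncomputable def chemDist {d : ℕ} (ω : ΩE d) (x y : V d) : ℕ∞ :=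
  sInf {r : ℕ∞ | ∃ l, PathFrom ω x y l ∧ r = ((l.length - 1 : ℕ) : ℕ∞)}

/-- `P` is the product Bernoulli measure with parameter `p` on `Ω_E`. -/
def IsBernoulli {d : ℕ} (p : ℝ) (P : Measure (ΩE d)) : Prop :=
  IsProbabilityMeasure P ∧
    ∀ (s : Finset (Edge d)) (f : Edge d → Bool),
      P {ω | ∀ e ∈ s, ω e = f e} = ∏ e ∈ s, ENNReal.ofReal (if f e then p else 1 - p)

/-- The critical probability `p_c(d)` of Bernoulli bond percolation on `ℤ^d`. -/
noncomputable def pc (d : ℕ) : ℝ :=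
  sSup {q : ℝ | q ∈ Icc (0:ℝ) 1 ∧
    ∀ P : Measure (ΩE d), IsBernoulli q P → P {ω | ClusterInf ω 0} = 0}

/-- `𝕊_ν` is stationary and ergodic for the translations of the grid. -/
def StatErg {d : ℕ} (Sν : Measure (ΩS d)) : Prop :=
  (∀ u : V d, MeasurePreserving (shiftC u) Sν Sν) ∧
    ∀ A : Set (ΩS d), MeasurableSet A → (∀ u : V d, shiftC u ⁻¹' A = A) →
      Sν A = 0 ∨ Sν A = 1

/-- Condition `(H_α)`. -/
def HAlpha {d : ℕ} (Sν : Measure (ΩS d)) (α : ℝ) : Prop :=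
  ∃ A B : ℝ, 0 < A ∧ 0 < B ∧ ∀ Λ : Finset (Edge d),
    Sν {η | B * Λ.card ≤ ∑ e ∈ Λ, (η e : ℝ)} ≤ ENNReal.ofReal (A / (Λ.card : ℝ) ^ α)

/-- The moment assumptions: uniformly bounded first moments and `(H_α)` for some `α > 1`. -/
def Moment {d : ℕ} (Sν : Measure (ΩS d)) : Prop :=
  (∃ m : ℝ, ∀ e : Edge d, ∫ η, (η e : ℝ) ∂Sν ≤ m) ∧ ∃ α : ℝ, 1 < α ∧ HAlpha Sν α

/-- Simultaneous shift of the environment and the passage times. -/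
def shiftPair {d : ℕ} (u : V d) (z : ΩE d × ΩS d) : ΩE d × ΩS d :=
  (shiftC u z.1, shiftC u z.2)

/-- `T^B_u(ω) = inf {n ≥ 1 : θ_{nu} ω ∈ B}`. -/
noncomputable def TB {d : ℕ} (B : Set (ΩE d)) (u : V d) (ω : ΩE d) : ℕ :=
  sInf {n : ℕ | 1 ≤ n ∧ shiftC ((n : ℤ) • u) ω ∈ B}

/-- The induced transformation `Θ^B_u`. -/
noncomputable def ThetaB {d : ℕ} (B : Set (ΩE d)) (u : V d) (z : ΩE d × ΩS d) : ΩE d × ΩS d :=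
  shiftPair ((TB B u z.1 : ℤ) • u) z

/-- `T^B_{n,u} = Σ_{k<n} T^B_u ∘ (Θ^B_u)^k`. -/
noncomputable def TBn {d : ℕ} (B : Set (ΩE d)) (u : V d) (n : ℕ) (z : ΩE d × ΩS d) : ℕ :=
  ∑ k ∈ Finset.range n, TB B u ((ThetaB B u)^[k] z).1

/-- The conditioned measure `ℙ̄_B = ℙ(· ∩ (B × Ω_S)) / ℙ_p(B)`. -/
noncomputable def Pbar {d : ℕ} (Pp : Measure (ΩE d)) (Sν : Measure (ΩS d)) [SFinite Sν]
    (B : Set (ΩE d)) : Measure (ΩE d × ΩS d) :=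
  (Pp B)⁻¹ • ((Pp.prod Sν).restrict (B ×ˢ univ))

/-- The event `{0 ↔ ∞}`. -/
def A0 (d : ℕ) : Set (ΩE d) := {ω | ClusterInf ω 0}

/-- `μ` is the semi-norm of directional asymptotic speeds:
`μ(0) = 0` and for `u ≠ 0`, `d(0, T^A_{n,u} u)/n → μ(u)/ℙ_p(0↔∞)` ℙ̄-a.s. -/
def MuSpec {d : ℕ} (Pp : Measure (ΩE d)) (Sν : Measure (ΩS d)) [SFinite Sν]
    (μ : V d → ℝ) : Prop :=
  μ 0 = 0 ∧ ∀ u : V d, u ≠ 0 →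
    ∀ᵐ z ∂(Pbar Pp Sν (A0 d)),
      Tendsto (fun n : ℕ =>
          (travelTime z.1 z.2 0 ((TBn (A0 d) u n z : ℤ) • u)).toReal / n)
        atTop (𝓝 (μ u / (Pp (A0 d)).toReal))

/-- The coexistence event `Coex(x,y)`. -/
def Coex {d : ℕ} (ω : ΩE d) (η : ΩS d) (x y : V d) : Prop :=
  {z : V d | travelTime ω η x z < travelTime ω η y z}.Infinite ∧
    {z : V d | travelTime ω η y z < travelTime ω η x z}.Infinite

/-- The separated coexistence event `Sep-Coex(x,y)`. -/
def SepCoex {d : ℕ} (ω : ΩE d) (η : ΩS d) (x y : V d) : Prop :=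
  Coex ω η x y ∧ ∀ z : V d, travelTime ω η x z = travelTime ω η y z →
    travelTime ω η x z = ⊤

/-- The vertex segment `(g n, …, g p)` of an infinite path. -/
def seg {d : ℕ} (g : ℕ → V d) (n p : ℕ) : List (V d) :=
  (List.range (p + 1 - n)).map (fun i => g (n + i))

/-- A semi-infinite geodesic for the travel time `d`. -/
def SemiGeo {d : ℕ} (ω : ΩE d) (η : ΩS d) (g : ℕ → V d) : Prop :=
  ∀ n p : ℕ, n ≤ p → PathFrom ω (g n) (g p) (seg g n p) ∧
    pathTime η (seg g n p) = travelTime ω η (g n) (g p)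

/-- A semi-infinite geodesic for the chemical distance `D`. -/
def DSemiGeo {d : ℕ} (ω : ΩE d) (g : ℕ → V d) : Prop :=
  ∀ n p : ℕ, n ≤ p → PathFrom ω (g n) (g p) (seg g n p) ∧
    chemDist ω (g n) (g p) = ((p - n : ℕ) : ℕ∞)

/-- The σ-algebra `𝓕_{Λ^c}` generated by the passage times of edges outside `Λ`. -/
def FLc {d : ℕ} (Λ : Finset (Edge d)) : MeasurableSpace (ΩS d) :=
  MeasurableSpace.comap (fun η (e : {e : Edge d // e ∉ Λ}) => η e.1) inferInstance

/-- Non-atomicity: `𝕊_ν(η_e = a | 𝓕_{Λ^c}) = 0` a.s. -/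
def NonAtomic {d : ℕ} (Sν : Measure (ΩS d)) : Prop :=
  ∀ Λ : Finset (Edge d), ∀ e ∈ Λ, ∀ a : ℝ≥0, ∀ G : Set (ΩS d),
    MeasurableSet[FLc Λ] G → Sν ({η | η e = a} ∩ G) = 0

/-- Finite energy: `𝕊_ν(η_e ≤ ε | 𝓕_{Λ^c}) > 0` a.s. -/
def FiniteEnergy {d : ℕ} (Sν : Measure (ΩS d)) : Prop :=
  ∀ Λ : Finset (Edge d), ∀ e ∈ Λ, ∀ ε : ℝ≥0, 0 < ε → ∀ G : Set (ΩS d),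
    MeasurableSet[FLc Λ] G → 0 < Sν G → 0 < Sν ({η | η e ≤ ε} ∩ G)

/-- Conditional unboundedness: `𝕊_ν(η_e ≥ M | 𝓕_{Λ^c}) > 0` a.s. -/
def CondUnbounded {d : ℕ} (Sν : Measure (ΩS d)) : Prop :=
  ∀ Λ : Finset (Edge d), ∀ e ∈ Λ, ∀ M : ℝ≥0, ∀ G : Set (ΩS d),
    MeasurableSet[FLc Λ] G → 0 < Sν G → 0 < Sν ({η | M ≤ η e} ∩ G)

/-- The passage times take values in `S ⊆ ℤ₊` a.s. -/
def DiscreteSupport {d : ℕ} (Sν : Measure (ΩS d)) (S : Set ℕ) : Prop :=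
  Sν {η | ∀ e, ∃ n ∈ S, η e = (n : ℝ≥0)} = 1

/-- Discrete finite energy: `𝕊_ν(η_Λ = e_Λ | 𝓕_{Λ^c}) > 0` a.s. for every `e_Λ ∈ S^Λ`. -/
def DiscreteFiniteEnergy {d : ℕ} (Sν : Measure (ΩS d)) (S : Set ℕ) : Prop :=
  ∀ Λ : Finset (Edge d), ∀ f : Edge d → ℕ, (∀ e, f e ∈ S) → ∀ G : Set (ΩS d),
    MeasurableSet[FLc Λ] G → 0 < Sν G →
      0 < Sν ({η | ∀ e ∈ Λ, η e = (f e : ℝ≥0)} ∩ G)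

/-- `𝕊_ν` is a product measure. -/
def IsProductMeasure {d : ℕ} (Sν : Measure (ΩS d)) : Prop :=
  ∀ (Λ : Finset (Edge d)) (A : Edge d → Set ℝ≥0), (∀ e, MeasurableSet (A e)) →
    Sν {η | ∀ e ∈ Λ, η e ∈ A e} = ∏ e ∈ Λ, Sν {η | η e ∈ A e}

/-- The strengthened integrability conditions (a), (b), (c). -/
def StrongIntegrability {d : ℕ} (p : ℝ) (Sν : Measure (ΩS d)) : Prop :=
  (∃ α : ℝ, (d : ℝ)^2 + 2 * d - 1 < α ∧ HAlpha Sν α) ∨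
  (p = 1 ∧ ∃ α : ℝ, (d : ℝ) < α ∧ ∃ C : ℝ, ∀ e : Edge d,
    ∫ η, (η e : ℝ) ^ α ∂Sν ≤ C) ∨
  (p = 1 ∧ IsProductMeasure Sν ∧ ∃ C : ℝ, ∀ e : Edge d,
    ∫ η, (η e : ℝ) ^ 2 ∂Sν ≤ C)

/-- The set of edges of a path. -/
def pathEdges {d : ℕ} (l : List (V d)) : Set (Sym2 (V d)) :=
  {e | ∃ q ∈ l.zip l.tail, e = s(q.1, q.2)}

/-- The passage time of a fixed path in the configuration `(ω,η)`:
`d(γ) = Σ_{e∈γ} η_e` if `γ` is open, `+∞` otherwise. -/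
noncomputable def pathCost {d : ℕ} (ω : ΩE d) (η : ΩS d) (l : List (V d)) : ℝ≥0∞ :=
  if l.Chain' (OpenStep ω) then pathTime η l else ⊤

-- fragment to splice before stmt17
section Aux
variable {d : ℕ} (ω : ΩE d) (η : ΩS d)

lemma pt_nil : pathTime η ([] : List (V d)) = 0 := by simp [pathTime]
lemma pt_single (v : V d) : pathTime η [v] = 0 := by simp [pathTime]
lemma pt_cons2 (a b : V d) (t : List (V d)) :
    pathTime η (a :: b :: t) = edgeTime η a b + pathTime η (b :: t) := by
  simp [pathTime]

lemma pt_append (v : V d) : ∀ (a b : List (V d)),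
    pathTime η (a ++ v :: b) = pathTime η (a ++ [v]) + pathTime η (v :: b) := by
  intro a
  induction a with
  | nil => intro b; simp [pt_single]
  | cons h t ih =>
    intro b
    cases t with
    | nil => simp [pt_cons2, pt_single]
    | cons h' t' =>
      have := ih b
      simp only [List.cons_append] at *
      rw [pt_cons2, pt_cons2, this, add_assoc]

lemma erase_loops : ∀ (n : ℕ) (l : List (V d)), l.length ≤ n → l ≠ [] →
    l.Chain' (OpenStep ω) → ∃ l', l' ≠ [] ∧ l'.Nodup ∧ l'.Chain' (OpenStep ω) ∧
      l'.head? = l.head? ∧ l'.getLast? = l.getLast? ∧ pathTime η l' ≤ pathTime η l ∧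
      ∀ v ∈ l', v ∈ l := by
  intro n
  induction n with
  | zero => intro l hl hne _; cases l <;> simp_all
  | succ n ih =>
    intro l hl hne hch
    match l, hne with
    | h :: t, _ =>
      by_cases hmem : h ∈ t
      · obtain ⟨p, q, rfl⟩ := List.append_of_mem hmem
        have hlen : (h :: q).length ≤ n := by
          simp only [List.length_cons, List.length_append] at hl ⊢; omega
        have hch2 : (h :: q).Chain' (OpenStep ω) :=
          ((List.isChain_append.mp hch.tail).2).1
        obtain ⟨l', h1, h2, h3, h4, h5, h6, h7⟩ :=
          ih (h :: q) hlen (by simp) hch2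
        refine ⟨l', h1, h2, h3, ?_, ?_, ?_, ?_⟩
        · simpa using h4
        · rw [h5]
          have : h :: (p ++ h :: q) = (h :: p) ++ h :: q := by simp
          rw [this, List.getLast?_append_of_ne_nil _ (by simp)]
        · refine h6.trans ?_
          have : h :: (p ++ h :: q) = (h :: p) ++ h :: q := by simp
          rw [this, pt_append]
          exact le_add_self
        · intro v hv
          have := h7 v hv
          simp at this ⊢
          tauto
      · cases t with
        | nil => exact ⟨[h], by simp, by simp, List.isChain_singleton _, rfl, rfl, le_rfl, by simp⟩
        | cons w s =>
          obtain ⟨t', h1, h2, h3, h4, h5, h6, h7⟩ :=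
            ih (w :: s) (by simp at hl ⊢; omega) (by simp) hch.tail
          have hhd : t'.head? = some w := by simpa using h4
          refine ⟨h :: t', by simp, ?_, ?_, by simp, ?_, ?_, ?_⟩
          · exact List.nodup_cons.mpr ⟨fun hc => hmem (h7 h hc), h2⟩
          · refine List.isChain_cons.mpr ⟨?_, h3⟩
            intro z hz
            rw [hhd] at hz
            cases hz
            exact (List.isChain_cons.mp hch).1 w rfl
          · show ([h] ++ t').getLast? = ([h] ++ w :: s).getLast?
            rw [List.getLast?_append_of_ne_nil _ h1,
              List.getLast?_append_of_ne_nil _ (by simp), h5]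
          · obtain ⟨s', rfl⟩ : ∃ s', t' = w :: s' := by
              cases t' with
              | nil => simp at hhd
              | cons a b => simp at hhd; exact ⟨b, by rw [hhd]⟩
            rw [pt_cons2, pt_cons2]
            exact add_le_add_right h6 _
          · intro v hv
            simp at hv ⊢
            rcases hv with rfl | hv
            · left; rfl
            · right; simpa using h7 v hv

lemma travelTime_le_pathTime {x z : V d} {l : List (V d)} (h : PathFrom ω x z l) :
    travelTime ω η x z ≤ pathTime η l :=
  sInf_le ⟨l, h, rfl⟩

lemma split_at {x z c : V d} {l : List (V d)} (h : PathFrom ω x z l) (hc : c ∈ l) :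
    travelTime ω η x c + travelTime ω η c z ≤ pathTime η l := by
  obtain ⟨⟨hne, hnd, hch⟩, hhd, hlast⟩ := h
  obtain ⟨a, b, rfl⟩ := List.append_of_mem hc
  rw [pt_append]
  have hsplit : a ++ c :: b = (a ++ [c]) ++ b := by simp
  gcongr
  · refine travelTime_le_pathTime ω η ⟨⟨by simp, ?_, ?_⟩, ?_, List.getLast?_concat (l := a)⟩
    · exact (hnd.sublist (by simpa using (List.sublist_append_right _ _).cons_cons c ▸
        ((List.singleton_sublist.mpr (List.mem_cons_self c b)).append_left a)))
    · rw [hsplit] at hch; exact (List.isChain_append.mp hch).1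
    · cases a with
      | nil => simpa using hhd
      | cons p q => simpa using hhd
  · refine travelTime_le_pathTime ω η ⟨⟨by simp, ?_, ?_⟩, rfl, ?_⟩
    · exact hnd.sublist (List.sublist_append_right a _)
    · exact (List.isChain_append.mp hch).2.1
    · rw [← hlast, List.getLast?_append_of_ne_nil _ (by simp)]

lemma travelTime_approx {x z : V d} (hfin : travelTime ω η x z < ⊤) {ε : ℝ≥0∞}
    (hε : ε ≠ 0) : ∃ l, PathFrom ω x z l ∧ pathTime η l ≤ travelTime ω η x z + ε := by
  have : travelTime ω η x z < travelTime ω η x z + ε :=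
    ENNReal.lt_add_right hfin.ne hε
  obtain ⟨r, ⟨l, hl, rfl⟩, hr⟩ := sInf_lt_iff.mp ((lt_of_le_of_lt le_rfl this))
  exact ⟨l, hl, hr.le⟩

lemma triangle (x w z : V d) :
    travelTime ω η x z ≤ travelTime ω η x w + travelTime ω η w z := by
  refine ENNReal.le_of_forall_pos_le_add fun ε hε htop => ?_
  rw [ENNReal.add_lt_top] at htop
  have hε2 : ((ε : ℝ≥0∞) / 2) ≠ 0 := by
    simp [ENNReal.div_eq_zero_iff]
    exact_mod_cast hε.ne'
  obtain ⟨l₁, hl₁, ht₁⟩ := travelTime_approx ω η htop.1 hε2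
  obtain ⟨l₂, hl₂, ht₂⟩ := travelTime_approx ω η htop.2 hε2
  obtain ⟨⟨hne₁, hnd₁, hch₁⟩, hhd₁, hla₁⟩ := hl₁
  obtain ⟨⟨hne₂, hnd₂, hch₂⟩, hhd₂, hla₂⟩ := hl₂
  obtain ⟨t, rfl⟩ : ∃ t, l₂ = w :: t := by
    cases l₂ with
    | nil => simp at hhd₂
    | cons p q => simp at hhd₂; exact ⟨q, by rw [hhd₂]⟩
  have hld : l₁.dropLast ++ [w] = l₁ := by
    have := List.dropLast_append_getLast hne₁
    rwa [show l₁.getLast hne₁ = w by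
      have := List.getLast?_eq_getLast hne₁
      rw [hla₁] at this; exact (Option.some_injective _ this.symm)] at this
  set a := l₁.dropLast with ha
  have hm : (a ++ w :: t).Chain' (OpenStep ω) := by
    rw [← hld] at hch₁
    obtain ⟨c1, c2, c3⟩ := List.isChain_append.mp hch₁
    exact List.isChain_append.mpr ⟨c1, hch₂, by simpa using c3⟩
  obtain ⟨l', h1, h2, h3, h4, h5, h6, _⟩ :=
    erase_loops ω η (a ++ w :: t).length _ le_rfl (by simp) hm
  have hd : travelTime ω η x z ≤ pathTime η (a ++ w :: t) := by
    refine (travelTime_le_pathTime ω η ⟨⟨h1, h2, h3⟩, ?_, ?_⟩).trans h6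
    · have he : (a ++ w :: t).head? = l₁.head? := by
        rw [← hld]; simp [List.head?_append]
      rw [h4, he, hhd₁]
    · rw [h5, List.getLast?_append_of_ne_nil _ (by simp), ← hla₂]
  rw [pt_append, hld] at hd
  calc travelTime ω η x z ≤ pathTime η l₁ + pathTime η (w :: t) := hd
    _ ≤ (travelTime ω η x w + ε / 2) + (travelTime ω η w z + ε / 2) :=
        add_le_add ht₁ ht₂
    _ = travelTime ω η x w + travelTime ω η w z + ε := by
        rw [add_add_add_comm, ENNReal.add_halves]

lemma key_lemma (C R : Set (V d)) (s : V d)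
    (hbs : ∀ l : List (V d), IsLatticePath l → l.head? = some s →
      ∀ z : V d, l.getLast? = some z → z ∉ R ∪ C → ∃ c ∈ C, c ∈ l)
    (z : V d) (hz : z ∉ R ∪ C) (hfin : travelTime ω η s z < ⊤) (ε : ℝ≥0)
    (hε : 0 < ε) :
    ∃ c ∈ C, travelTime ω η s c + travelTime ω η c z ≤ travelTime ω η s z + ε ∧
      travelTime ω η c z < ⊤ ∧ travelTime ω η s c < ⊤ := by
  obtain ⟨l, hl, hpt⟩ := travelTime_approx ω η hfin
    (by exact_mod_cast hε.ne' : (ε : ℝ≥0∞) ≠ 0)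
  have hlat : IsLatticePath l :=
    ⟨hl.1.1, hl.1.2.1, hl.1.2.2.imp fun a b h => h.choose⟩
  obtain ⟨c, hc, hcl⟩ := hbs l hlat hl.2.1 z hl.2.2 hz
  have hsum : travelTime ω η s c + travelTime ω η c z ≤ travelTime ω η s z + ε :=
    (split_at ω η hl hcl).trans hpt
  have htop : travelTime ω η s z + (ε : ℝ≥0∞) < ⊤ :=
    ENNReal.add_lt_top.mpr ⟨hfin, ENNReal.coe_lt_top⟩
  exact ⟨c, hc, hsum, lt_of_le_of_lt (le_add_self.trans hsum) htop,
    lt_of_le_of_lt (le_self_add.trans hsum) htop⟩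

end Aux

/-- Remark: if a finite set `C` of mutually `d`-equidistant (at distance `0`) points
surrounds the finite set `R ∋ x, y` — every path from `x` or `y` to the outside of
`R ∪ C` must meet `C` — then coexistence of `x` and `y` fails. -/
theorem stmt17 (d : ℕ) (hd : 2 ≤ d) (ω : ΩE d) (η : ΩS d) (x y : V d) (hxy : x ≠ y)
    (C R : Set (V d)) (hCfin : C.Finite) (hCne : C.Nonempty)
    (hC0 : ∀ c ∈ C, ∀ c' ∈ C, travelTime ω η c c' = 0)
    (hRfin : R.Finite) (hxR : x ∈ R) (hyR : y ∈ R)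
    (hblock : ∀ s ∈ ({x, y} : Set (V d)), ∀ l : List (V d), IsLatticePath l →
      l.head? = some s → ∀ z : V d, l.getLast? = some z → z ∉ R ∪ C →
        ∃ c ∈ C, c ∈ l) :
    ¬ Coex ω η x y := by
  rintro ⟨h1, h2⟩
  obtain ⟨z₁, hz₁, hz₁'⟩ := h1.exists_notMem_finite (hRfin.union hCfin)
  obtain ⟨z₂, hz₂, hz₂'⟩ := h2.exists_notMem_finite (hRfin.union hCfin)
  simp only [Set.mem_setOf_eq] at hz₁ hz₂
  have hfx : travelTime ω η x z₁ < ⊤ := hz₁.trans_le le_top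
  have hfy : travelTime ω η y z₂ < ⊤ := hz₂.trans_le le_top
  have hbx := hblock x (by simp)
  have hby := hblock y (by simp)
  have const : ∀ u : V d, ∀ c ∈ C, ∀ c' ∈ C,
      travelTime ω η u c = travelTime ω η u c' := by
    intro u c hc c' hc'
    refine le_antisymm ?_ ?_
    · exact (triangle ω η u c' c).trans (by rw [hC0 c' hc' c hc, add_zero])
    · exact (triangle ω η u c c').trans (by rw [hC0 c hc c' hc', add_zero])
  obtain ⟨c₀, hc₀⟩ := hCne
  set a := travelTime ω η x c₀ with ha
  set b := travelTime ω η y c₀ with hb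
  have hab : a ≤ b := by
    refine ENNReal.le_of_forall_pos_le_add fun ε hε _ => ?_
    obtain ⟨c, hc, hsum, htz, _⟩ := key_lemma ω η C R x hbx z₁ hz₁' hfx ε hε
    have hda : a = travelTime ω η x c := const x c₀ hc₀ c hc
    have hdb : travelTime ω η y c = b := const y c hc c₀ hc₀
    have h5 : travelTime ω η y z₁ ≤ b + travelTime ω η c z₁ :=
      (triangle ω η y c z₁).trans (by rw [hdb])
    have h6 : a + travelTime ω η c z₁ < (b + ε) + travelTime ω η c z₁ := by
      calc a + travelTime ω η c z₁ ≤ travelTime ω η x z₁ + ε := by rw [hda]; exact hsum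
        _ < travelTime ω η y z₁ + ε := ENNReal.add_lt_add_right ENNReal.coe_ne_top hz₁
        _ ≤ (b + travelTime ω η c z₁) + ε := add_le_add_left h5 _
        _ = (b + ε) + travelTime ω η c z₁ := by ring
    exact ((ENNReal.add_lt_add_iff_right htz.ne).mp h6).le
  have hba : b ≤ a := by
    refine ENNReal.le_of_forall_pos_le_add fun ε hε _ => ?_
    obtain ⟨c, hc, hsum, htz, _⟩ := key_lemma ω η C R y hby z₂ hz₂' hfy ε hε
    have hda : b = travelTime ω η y c := const y c₀ hc₀ c hc
    have hdb : travelTime ω η x c = a := const x c hc c₀ hc₀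
    have h5 : travelTime ω η x z₂ ≤ a + travelTime ω η c z₂ :=
      (triangle ω η x c z₂).trans (by rw [hdb])
    have h6 : b + travelTime ω η c z₂ < (a + ε) + travelTime ω η c z₂ := by
      calc b + travelTime ω η c z₂ ≤ travelTime ω η y z₂ + ε := by rw [hda]; exact hsum
        _ < travelTime ω η x z₂ + ε := ENNReal.add_lt_add_right ENNReal.coe_ne_top hz₂
        _ ≤ (a + travelTime ω η c z₂) + ε := add_le_add_left h5 _
        _ = (a + ε) + travelTime ω η c z₂ := by ring
    exact ((ENNReal.add_lt_add_iff_right htz.ne).mp h6).le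
  have heq : a = b := le_antisymm hab hba
  have : travelTime ω η y z₁ ≤ travelTime ω η x z₁ := by
    refine ENNReal.le_of_forall_pos_le_add fun ε hε _ => ?_
    obtain ⟨c, hc, hsum, htz, _⟩ := key_lemma ω η C R x hbx z₁ hz₁' hfx ε hε
    calc travelTime ω η y z₁ ≤ travelTime ω η y c + travelTime ω η c z₁ :=
          triangle ω η y c z₁
      _ = b + travelTime ω η c z₁ := by rw [const y c hc c₀ hc₀]
      _ = a + travelTime ω η c z₁ := by rw [heq]
      _ = travelTime ω η x c + travelTime ω η c z₁ := by
            rw [ha, const x c₀ hc₀ c hc]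
      _ ≤ travelTime ω η x z₁ + ε := hsum
  exact absurd hz₁ this.not_gt


end GM
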